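/- Let μ ∈ ℝ and σ > 0, and let X be a random variable with law gaussianReal μ σ² (the normal distribution with mean μ and variance σ²). Then Var(sign(X)) = 1 − erf(μ/(√2·σ))², where erf(x) := (2/√π) ∫₀ˣ exp(−t²) dt and sign(x) is 1 for x > 0, −1 for x < 0, and 0 for x = 0. -/

import Mathlib

open MeasureTheory ProbabilityTheory
open scoped NNReal

/-- The Gauss error function. -/
noncomputable def erf (x : ℝ) : ℝ :=
  (2 / Real.sqrt Real.pi) * ∫ t in (0 : ℝ)..x, Real.exp (-t ^ 2)

lemma sign_eq_indicator (x : ℝ) :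
    Real.sign x = (Set.Ioi (0:ℝ)).indicator (fun _ => (1:ℝ)) x
      - (Set.Iio (0:ℝ)).indicator (fun _ => (1:ℝ)) x := by
  rcases lt_trichotomy x 0 with h | h | h
  · simp [Real.sign_of_neg h, Set.indicator_apply, h, lt_asymm h]
  · simp [h]
  · simp [Real.sign_of_pos h, Set.indicator_apply, h, lt_asymm h]

lemma measurable_realSign : Measurable Real.sign := by
  have : Real.sign = fun x => (Set.Ioi (0:ℝ)).indicator (fun _ => (1:ℝ)) x
      - (Set.Iio (0:ℝ)).indicator (fun _ => (1:ℝ)) x := funext sign_eq_indicator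
  rw [this]
  exact (measurable_const.indicator measurableSet_Ioi).sub
    (measurable_const.indicator measurableSet_Iio)

lemma integral_gaussianPDFReal_interval (μ σ : ℝ) (hσ : 0 < σ) :
    ∫ x in (0:ℝ)..(2*μ), gaussianPDFReal μ ⟨σ^2, sq_nonneg σ⟩ x
      = erf (μ / (Real.sqrt 2 * σ)) := by
  set s : ℝ := Real.sqrt 2 * σ with hs_def
  have hs_pos : 0 < s := by positivity
  have hs_ne : s ≠ 0 := hs_pos.ne'
  have hs2 : s ^ 2 = 2 * σ ^ 2 := by
    rw [hs_def, mul_pow, Real.sq_sqrt (by norm_num : (0:ℝ) ≤ 2)]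
  have hK : ∀ x : ℝ, gaussianPDFReal μ ⟨σ^2, sq_nonneg σ⟩ x
      = (Real.sqrt (2 * Real.pi * σ^2))⁻¹ * Real.exp (-(x/s - μ/s)^2) := by
    intro x
    unfold gaussianPDFReal
    congr 1
    change Real.exp (-(x - μ) ^ 2 / (2 * σ ^ 2)) = _
    rw [div_sub_div_same, div_pow, hs2]
    push_cast
    ring_nf
  have hg : Continuous fun t : ℝ => Real.exp (-t^2) := by continuity
  have hsym : (∫ t in (-(μ/s))..(0:ℝ), Real.exp (-t^2))
      = ∫ t in (0:ℝ)..(μ/s), Real.exp (-t^2) := by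
    have := intervalIntegral.integral_comp_neg (a := (0:ℝ)) (b := μ/s)
      (fun t => Real.exp (-t^2))
    simp only [neg_zero, neg_neg] at this ⊢
    rw [← this]
    congr 1
    funext t
    rw [neg_pow, ← neg_neg t]
    ring_nf
  have hsplit : (∫ t in (-(μ/s))..(μ/s), Real.exp (-t^2))
      = 2 * ∫ t in (0:ℝ)..(μ/s), Real.exp (-t^2) := by
    rw [← intervalIntegral.integral_add_adjacent_intervals
      (hg.intervalIntegrable (-(μ/s)) 0) (hg.intervalIntegrable 0 (μ/s)), hsym]
    ring
  have hsqrt : Real.sqrt (2 * Real.pi * σ^2) = Real.sqrt 2 * Real.sqrt Real.pi * σ := by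
    rw [Real.sqrt_mul (by positivity), Real.sqrt_mul (by norm_num),
      Real.sqrt_sq hσ.le]
  calc ∫ x in (0:ℝ)..(2*μ), gaussianPDFReal μ ⟨σ^2, sq_nonneg σ⟩ x
      = (Real.sqrt (2 * Real.pi * σ^2))⁻¹
          * ∫ x in (0:ℝ)..(2*μ), Real.exp (-(x/s - μ/s)^2) := by
        simp_rw [hK]
        rw [intervalIntegral.integral_const_mul]
    _ = (Real.sqrt (2 * Real.pi * σ^2))⁻¹
          * (s * ∫ t in (-(μ/s))..(μ/s), Real.exp (-t^2)) := by
        have hb1 : (0:ℝ)/s - μ/s = -(μ/s) := by rw [zero_div, zero_sub]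
        have hb2 : 2*μ/s - μ/s = μ/s := by ring
        rw [intervalIntegral.integral_comp_div_sub (fun t => Real.exp (-t^2)) hs_ne (μ/s),
          hb1, hb2, smul_eq_mul]
    _ = erf (μ / (Real.sqrt 2 * σ)) := by
        rw [hsplit, hsqrt, erf, ← hs_def]
        have h2 : Real.sqrt 2 ≠ 0 := by positivity
        have hπ : Real.sqrt Real.pi ≠ 0 := by
          positivity
        field_simp [hs_def]
        ring

/-- For `X` Gaussian with mean `μ` and variance `σ²` (`σ > 0`),
`Var(sign(X)) = 1 − erf(μ/(√2·σ))²`. -/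
theorem variance_sign_gaussian {Ω : Type*} [MeasureSpace Ω]
    [IsProbabilityMeasure (volume : Measure Ω)] (μ σ : ℝ) (hσ : 0 < σ)
    (X : Ω → ℝ) (hX : Measurable X)
    (hlaw : Measure.map X volume = gaussianReal μ ⟨σ ^ 2, sq_nonneg σ⟩) :
    Var[fun ω => Real.sign (X ω)] = 1 - erf (μ / (Real.sqrt 2 * σ)) ^ 2 := by
  set v : ℝ≥0 := ⟨σ ^ 2, sq_nonneg σ⟩ with hv_def
  have hv : v ≠ 0 := by
    intro h
    have : (v : ℝ) = 0 := by rw [h]; simp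
    rw [hv_def] at this
    exact (pow_ne_zero 2 hσ.ne') this
  set ν : Measure ℝ := gaussianReal μ v with hν_def
  set Y : Ω → ℝ := fun ω => Real.sign (X ω) with hY_def
  have hYm : Measurable Y := measurable_realSign.comp hX
  have hmem : MemLp Y 2 (volume : Measure Ω) := by
    refine MemLp.of_bound hYm.aestronglyMeasurable 1 (Filter.Eventually.of_forall fun ω => ?_)
    rcases Real.sign_apply_eq (X ω) with h | h | h <;>
      simp [hY_def, h]
  -- X ≠ 0 a.s.
  have h0 : (volume : Measure Ω) (X ⁻¹' {0}) = 0 := by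
    rw [← Measure.map_apply hX (measurableSet_singleton 0), hlaw]
    exact (gaussianReal_absolutelyContinuous μ hv) Real.volume_singleton
  have hX0 : ∀ᵐ ω : Ω, X ω ≠ 0 := by
    rw [ae_iff]
    convert h0 using 2
    ext ω
    simp
  -- E[Y²] = 1
  have hsq : ∫ ω, (Y ω) ^ 2 = 1 := by
    have h1 : (fun ω => (Y ω) ^ 2) =ᵐ[volume] fun _ => (1:ℝ) := by
      filter_upwards [hX0] with ω hω
      rcases Real.sign_apply_eq_of_ne_zero (X ω) hω with h | h <;> simp [hY_def, h]
    rw [integral_congr_ae h1]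
    simp
  -- E[Y] in terms of ν
  have hEY : ∫ ω, Y ω = ∫ x, Real.sign x ∂ν := by
    rw [← hlaw, integral_map hX.aemeasurable measurable_realSign.aestronglyMeasurable]
  have hsint : ∫ x, Real.sign x ∂ν
      = (ν (Set.Ioi 0)).toReal - (ν (Set.Iio 0)).toReal := by
    have hind1 : Integrable ((Set.Ioi (0:ℝ)).indicator fun _ => (1:ℝ)) ν :=
      (integrable_const 1).indicator measurableSet_Ioi
    have hind2 : Integrable ((Set.Iio (0:ℝ)).indicator fun _ => (1:ℝ)) ν :=
      (integrable_const 1).indicator measurableSet_Iio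
    simp_rw [sign_eq_indicator]
    rw [integral_sub hind1 hind2]
    rw [show ((Set.Ioi (0:ℝ)).indicator fun _ => (1:ℝ)) = (Set.Ioi (0:ℝ)).indicator 1 from rfl,
      show ((Set.Iio (0:ℝ)).indicator fun _ => (1:ℝ)) = (Set.Iio (0:ℝ)).indicator 1 from rfl,
      integral_indicator_one measurableSet_Ioi, integral_indicator_one measurableSet_Iio]
    rfl
  -- symmetry: ν (Iio 0) = ν (Ioi (2μ))
  have hcomp : (fun x : ℝ => 2*μ - x) = (fun y => y + 2*μ) ∘ (fun x : ℝ => x * (-1)) := by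
    funext x; simp; ring
  have hmap : ν.map (fun x => 2*μ - x) = ν := by
    rw [hν_def, hcomp, ← Measure.map_map
      (by fun_prop : Measurable fun y : ℝ => y + 2*μ)
      (by fun_prop : Measurable fun x : ℝ => x * (-1)), gaussianReal_map_mul_const (-1)]
    have h1 : (NNReal.mk ((-1:ℝ)^2) (sq_nonneg _) * v : ℝ≥0) = v := by
      ext; simp
    rw [h1, gaussianReal_map_add_const]
    congr 1
    ring
  have hIio : ν (Set.Iio 0) = ν (Set.Ioi (2*μ)) := by
    conv_lhs => rw [← hmap]
    rw [Measure.map_apply (by fun_prop) measurableSet_Iio]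
    congr 1
    ext x
    simp [sub_neg]
  -- measures to integrals
  have htoReal : ∀ a : ℝ, (ν (Set.Ioi a)).toReal = ∫ x in Set.Ioi a, gaussianPDFReal μ v x := by
    intro a
    rw [hν_def, gaussianReal_apply_eq_integral μ hv,
      ENNReal.toReal_ofReal (setIntegral_nonneg measurableSet_Ioi
        fun x _ => gaussianPDFReal_nonneg _ _ _)]
  have hint := integrable_gaussianPDFReal μ v
  have h1 : ∀ a : ℝ, ∫ x in Set.Ioi a, gaussianPDFReal μ v x
      = (∫ x, gaussianPDFReal μ v x) - ∫ x in Set.Iic a, gaussianPDFReal μ v x := by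
    intro a
    have := integral_add_compl (measurableSet_Iic (a := a)) hint
    rw [Set.compl_Iic] at this
    linarith
  have hdiff : (ν (Set.Ioi 0)).toReal - (ν (Set.Ioi (2*μ))).toReal
      = ∫ x in (0:ℝ)..(2*μ), gaussianPDFReal μ v x := by
    rw [htoReal, htoReal, h1, h1,
      ← intervalIntegral.integral_Iic_sub_Iic hint.integrableOn hint.integrableOn]
    ring
  have hEY' : ∫ ω, Y ω = erf (μ / (Real.sqrt 2 * σ)) := by
    rw [hEY, hsint, hIio, hdiff, hv_def, integral_gaussianPDFReal_interval μ σ hσ]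
  rw [variance_eq_sub hmem]
  have hpow : ((fun ω => Real.sign (X ω)) ^ 2) = fun ω => (Y ω) ^ 2 := by
    funext ω; simp [hY_def]
  calc (volume : Measure Ω)[(fun ω => Real.sign (X ω)) ^ 2]
        - (volume : Measure Ω)[fun ω => Real.sign (X ω)] ^ 2
      = (∫ ω, (Y ω) ^ 2) - (∫ ω, Y ω) ^ 2 := by rw [hpow]
    _ = 1 - erf (μ / (Real.sqrt 2 * σ)) ^ 2 := by rw [hsq, hEY']
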